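/- Let n ≥ 2 and let a_1, …, a_{3n} be positive integers with Σ_i a_i = nB and B/4 < a_i < B/2 for every i. Define an instance of Seat Arrangement with agents P = P_T ∪ P_A ∪ {p_r}, where P_T = {p_{t_1}, …, p_{t_n}}, P_A = {p_{a_1}, …, p_{a_{3n}}}, and p_r is a root agent; preferences: f_{p_t}(p_r) = B and f_{p_t}(p_{a_i}) = a_i for every p_t ∈ P_T and every i, and all other preferences are 0. Let the seat graph be the tree on 4n + 1 vertices with a root vertex v_r having n children, each child having exactly 3 leaf children. Then an envy-free arrangement exists if and only if {a_1, …, a_{3n}} can be partitioned into n triples each summing to B. -/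

import Mathlib

open scoped Classical

noncomputable section

namespace SeatArrangement

variable {P V : Type*}

/-- The utility of agent `p` under arrangement `π`:
the sum, over the seat-graph neighbors `v` of `π p`, of `p`'s preference for the agent seated
at `v`. -/
def utility [Fintype V] (G : SimpleGraph V) (f : P → P → ℝ) (π : P ≃ V) (p : P) : ℝ :=
  ∑ v : V, if G.Adj (π p) v then f p (π.symm v) else 0

/-- The social welfare of an arrangement: the sum of the utilities of all agents. -/
def sw [Fintype P] [Fintype V] (G : SimpleGraph V) (f : P → P → ℝ) (π : P ≃ V) : ℝ :=
  ∑ p : P, utility G f π p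

/-- The `(p,q)`-swap arrangement of `π`. -/
def swapArr (π : P ≃ V) (p q : P) : P ≃ V := (Equiv.swap p q).trans π

/-- `{p, q}` is a blocking pair for `π`: both agents strictly improve by swapping seats. -/
def blocking [Fintype V] (G : SimpleGraph V) (f : P → P → ℝ) (π : P ≃ V) (p q : P) : Prop :=
  p ≠ q ∧ utility G f π p < utility G f (swapArr π p q) p
        ∧ utility G f π q < utility G f (swapArr π p q) q

/-- An arrangement is stable if it has no blocking pair. -/
def stable [Fintype V] (G : SimpleGraph V) (f : P → P → ℝ) (π : P ≃ V) : Prop :=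
  ∀ p q : P, ¬ blocking G f π p q

/-- An arrangement is envy-free if no agent would strictly improve by taking
another agent's seat (via a swap). -/
def envyFree [Fintype V] (G : SimpleGraph V) (f : P → P → ℝ) (π : P ≃ V) : Prop :=
  ∀ p q : P, p ≠ q → utility G f (swapArr π p q) p ≤ utility G f π p

/-- The least utility of an agent under `π` (for a finite nonempty set of agents, the
infimum of the range of utilities is the minimum utility). -/
def minUtil [Fintype V] (G : SimpleGraph V) (f : P → P → ℝ) (π : P ≃ V) : ℝ :=
  sInf (Set.range (utility G f π))

/-- A maximin arrangement maximizes the least utility of an agent. -/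
def maximin [Fintype V] (G : SimpleGraph V) (f : P → P → ℝ) (πf : P ≃ V) : Prop :=
  ∀ π : P ≃ V, minUtil G f π ≤ minUtil G f πf

/-- A maximum arrangement maximizes the social welfare. -/
def maximum [Fintype P] [Fintype V] (G : SimpleGraph V) (f : P → P → ℝ) (πm : P ≃ V) : Prop :=
  ∀ π : P ≃ V, sw G f π ≤ sw G f πm

end SeatArrangement

open SeatArrangement

/-- Agents for STATEMENT 13: `Fin n` are the triple agents `P_T`, `Fin (3n)` are the
element agents `P_A`, and `Unit` is the root agent `p_r`. -/
abbrev Agents13 (n : ℕ) := Fin n ⊕ (Fin (3 * n) ⊕ Unit)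

/-- Seats for STATEMENT 13: a root vertex, `n` inner vertices, and `3n` leaves
(`Fin n × Fin 3`). -/
abbrev Seats13 (n : ℕ) := Unit ⊕ (Fin n ⊕ (Fin n × Fin 3))

/-- Preferences for STATEMENT 13: each `p_t ∈ P_T` has preference `B` for the root agent and
preference `a_i` for the element agent `p_{a_i}`; all other preferences are 0. -/
def prefs13 (n B : ℕ) (a : Fin (3 * n) → ℕ) : Agents13 n → Agents13 n → ℝ
  | .inl _, .inr (.inr _) => B
  | .inl _, .inr (.inl i) => a i
  | _, _ => 0

/-- The seat graph for STATEMENT 13: the tree on `4n + 1` vertices whose root `v_r` has `n`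
children, each child having exactly three leaf children. -/
def seat13 (n : ℕ) : SimpleGraph (Seats13 n) where
  Adj x y :=
    match x, y with
    | .inl _, .inr (.inl _) => True
    | .inr (.inl _), .inl _ => True
    | .inr (.inl i), .inr (.inr l) => i = l.1
    | .inr (.inr l), .inr (.inl i) => i = l.1
    | _, _ => False
  symm := by
    constructor
    rintro (x | x | x) (y | y | y) h <;> simp_all
  loopless := by
    constructor
    rintro (x | x | x) h <;> simp_all

section Aux
variable {n B : ℕ} {a : Fin (3*n) → ℕ}

/-- common valuation of triple agents -/
def val13 (n B : ℕ) (a : Fin (3*n) → ℕ) : Agents13 n → ℝ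
  | .inl _ => 0
  | .inr (.inl i) => a i
  | .inr (.inr _) => B

lemma prefs13_eq (t : Fin n) (q : Agents13 n) : prefs13 n B a (.inl t) q = val13 n B a q := by
  rcases q with t' | (i | u) <;> rfl

lemma ite_true_any {M : Sort*} (inst : Decidable True) (x y : M) :
    @ite M True inst x y = x := by rw [if_pos trivial]

lemma ite_false_any {M : Sort*} (inst : Decidable False) (x y : M) :
    @ite M False inst x y = y := by rw [if_neg id]

/-- seat value -/
def sv13 (n B : ℕ) (a : Fin (3*n) → ℕ) (u : Seats13 n → Agents13 n) (v : Seats13 n) : ℝ :=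
  ∑ w : Seats13 n, if (seat13 n).Adj v w then val13 n B a (u w) else 0

lemma sv13_root (u : Seats13 n → Agents13 n) :
    sv13 n B a u (.inl ()) = ∑ i : Fin n, val13 n B a (u (.inr (.inl i))) := by
  simp only [sv13, seat13, Fintype.sum_sum_type, Fintype.sum_prod_type, SimpleGraph.Adj]
  simp [ite_true_any, ite_false_any]

lemma sv13_inner (u : Seats13 n → Agents13 n) (i : Fin n) :
    sv13 n B a u (.inr (.inl i)) =
      val13 n B a (u (.inl ())) + ∑ j : Fin 3, val13 n B a (u (.inr (.inr (i, j)))) := by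
  simp only [sv13, seat13, Fintype.sum_sum_type, Fintype.sum_prod_type, SimpleGraph.Adj]
  simp [ite_true_any, ite_false_any]
  rw [Finset.sum_comm]
  refine Finset.sum_congr rfl (fun y _ => ?_)
  rw [Finset.sum_eq_single i]
  · simp
  · intro b _ hb; simp [hb, Ne.symm hb]
  · intro h; exact absurd (Finset.mem_univ i) h

lemma sv13_leaf (u : Seats13 n → Agents13 n) (i : Fin n) (j : Fin 3) :
    sv13 n B a u (.inr (.inr (i, j))) = val13 n B a (u (.inr (.inl i))) := by
  simp only [sv13, seat13, Fintype.sum_sum_type, Fintype.sum_prod_type, SimpleGraph.Adj]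
  simp [ite_true_any, ite_false_any]
  rw [Finset.sum_eq_single i]
  · simp
  · intro b _ hb; simp [hb]
  · intro h; exact absurd (Finset.mem_univ i) h

end Aux
section Aux2
variable {n B : ℕ} {a : Fin (3*n) → ℕ}

lemma utility13_triple (π : Agents13 n ≃ Seats13 n) (t : Fin n) :
    utility (seat13 n) (prefs13 n B a) π (.inl t) =
      sv13 n B a (fun w => π.symm w) (π (.inl t)) := by
  unfold utility sv13
  simp only [prefs13_eq]

lemma swapArr13_apply_fst {P V : Type*} (π : P ≃ V) (p q : P) :
    swapArr π p q p = π q := by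
  unfold swapArr
  simp

lemma swapArr13_symm_left {P V : Type*} (π : P ≃ V) (p q : P) (w : V)
    (h : π.symm w = p) : (swapArr π p q).symm w = q := by
  unfold swapArr
  simp [h]

lemma swapArr13_symm_right {P V : Type*} (π : P ≃ V) (p q : P) (w : V)
    (h : π.symm w = q) : (swapArr π p q).symm w = p := by
  unfold swapArr
  simp [h]

lemma swapArr13_symm_of_ne {P V : Type*} (π : P ≃ V) (p q : P) (w : V)
    (h1 : π.symm w ≠ p) (h2 : π.symm w ≠ q) : (swapArr π p q).symm w = π.symm w := by
  unfold swapArr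
  simp [Equiv.swap_apply_of_ne_of_ne h1 h2]

lemma utility13_swap (π : Agents13 n ≃ Seats13 n) (t : Fin n) (q : Agents13 n) :
    utility (seat13 n) (prefs13 n B a) (swapArr π (.inl t) q) (.inl t) =
      sv13 n B a (fun w => (swapArr π (.inl t) q).symm w) (π q) := by
  unfold utility sv13
  simp only [prefs13_eq, swapArr13_apply_fst]

lemma ef_key (π : Agents13 n ≃ Seats13 n)
    (hEF : envyFree (seat13 n) (prefs13 n B a) π) (t : Fin n) (q : Agents13 n)
    (hq : Sum.inl t ≠ q) :
    sv13 n B a (fun w => (swapArr π (.inl t) q).symm w) (π q) ≤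
      sv13 n B a (fun w => π.symm w) (π (.inl t)) := by
  have h := hEF (.inl t) q hq
  rwa [utility13_swap, utility13_triple] at h

lemma sv13_total (π : Agents13 n ≃ Seats13 n) (hsum : ∑ i, a i = n * B) :
    ∑ w : Seats13 n, val13 n B a (π.symm w) = (n + 1) * B := by
  rw [Equiv.sum_comp π.symm (val13 n B a)]
  rw [Fintype.sum_sum_type, Fintype.sum_sum_type]
  have h1 : ∑ t : Fin n, val13 n B a (Sum.inl t) = 0 := by simp [val13]
  have h2 : ∑ i : Fin (3*n), val13 n B a (Sum.inr (Sum.inl i)) = (n : ℝ) * B := by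
    show (∑ i : Fin (3*n), (a i : ℝ)) = _
    rw [← Nat.cast_sum]
    rw [hsum]; push_cast; ring
  have h3 : ∑ u : Unit, val13 n B a (Sum.inr (Sum.inr u)) = (B : ℝ) := by
    simp [val13]
  rw [h1, h2, h3]; ring

end Aux2
section Aux3
variable {n B : ℕ} {a : Fin (3*n) → ℕ}

lemma prefs13_nontriple (x : Fin (3*n) ⊕ Unit) (y : Agents13 n) :
    prefs13 n B a (.inr x) y = 0 := by
  rcases x with i | u <;> rcases y with t | (i' | u') <;> rfl

lemma utility13_nontriple (π : Agents13 n ≃ Seats13 n) (x : Fin (3*n) ⊕ Unit) :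
    utility (seat13 n) (prefs13 n B a) π (.inr x) = 0 := by
  unfold utility
  rw [Finset.sum_eq_zero]
  intro w _
  rw [prefs13_nontriple]
  simp

end Aux3

section Constr
variable {n B : ℕ} {a : Fin (3*n) → ℕ}

theorem constr13 (hn : 2 ≤ n) (hpos : ∀ i, 0 < a i) (hsum : ∑ i, a i = n * B)
    (hrange : ∀ i, (B : ℝ) / 4 < (a i : ℝ) ∧ (a i : ℝ) < (B : ℝ) / 2)
    (g : Fin (3 * n) → Fin n)
    (hg : ∀ t : Fin n, (Finset.univ.filter fun i => g i = t).card = 3 ∧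
      (∑ i ∈ Finset.univ.filter fun i => g i = t, a i) = B) :
    ∃ π : Agents13 n ≃ Seats13 n, envyFree (seat13 n) (prefs13 n B a) π := by
  classical
  have hB0 : (0:ℝ) ≤ B := Nat.cast_nonneg B
  have haleB : ∀ i, (a i : ℝ) ≤ B := fun i => le_trans (hrange i).2.le (by linarith)
  -- the seating function for elements
  set F : Fin n × Fin 3 → Fin (3*n) :=
    fun x => ((Finset.univ.filter fun i => g i = x.1).orderIsoOfFin (hg x.1).1 x.2 : _) with hF
  have hFmem : ∀ x, F x ∈ Finset.univ.filter fun i => g i = x.1 :=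
    fun x => ((Finset.univ.filter fun i => g i = x.1).orderIsoOfFin (hg x.1).1 x.2).2
  have hgF : ∀ x, g (F x) = x.1 := by
    intro x
    have h := hFmem x
    rw [Finset.mem_filter] at h
    exact h.2
  have hFinj : Function.Injective F := by
    rintro ⟨t1, j1⟩ ⟨t2, j2⟩ hxy
    have e1 := hgF (t1, j1)
    have e2 := hgF (t2, j2)
    rw [hxy] at e1
    have h1 : t1 = t2 := e1.symm.trans e2
    subst h1
    have h2 : j1 = j2 := by
      simp only [hF] at hxy
      exact (Finset.orderIsoOfFin _ (hg t1).1).injective (Subtype.coe_injective hxy)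
    rw [h2]
  have hFbij : Function.Bijective F :=
    (Fintype.bijective_iff_injective_and_card F).2 ⟨hFinj, by simp [mul_comm]⟩
  set E := Equiv.ofBijective F hFbij with hE
  have hgE : ∀ x, g (E x) = x.1 := hgF
  let π : Agents13 n ≃ Seats13 n :=
    { toFun := fun p => match p with
        | .inl t => .inr (.inl t)
        | .inr (.inl i) => .inr (.inr (E.symm i))
        | .inr (.inr _) => .inl ()
      invFun := fun v => match v with
        | .inl _ => .inr (.inr ())
        | .inr (.inl t) => .inl t
        | .inr (.inr x) => .inr (.inl (E x))
      left_inv := by rintro (t | (i | ⟨⟩)) <;> simp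
      right_inv := by rintro (⟨⟩ | (t | x)) <;> simp }
  have hπt : ∀ s : Fin n, π (.inl s) = .inr (.inl s) := fun _ => rfl
  have hπe : ∀ i, π (.inr (.inl i)) = .inr (.inr (E.symm i)) := fun _ => rfl
  have hπr : ∀ u : Unit, π (.inr (.inr u)) = .inl () := fun _ => rfl
  have hsymr : π.symm (.inl ()) = .inr (.inr ()) := rfl
  have hsymt : ∀ s : Fin n, π.symm (.inr (.inl s)) = .inl s := fun _ => rfl
  have hsyml : ∀ x : Fin n × Fin 3, π.symm (.inr (.inr x)) = .inr (.inl (E x)) := fun _ => rfl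
  have hsumt : ∀ s : Fin n, (∑ j : Fin 3, val13 n B a (.inr (.inl (E (s, j))))) = B := by
    intro s
    show (∑ j : Fin 3, (a (E (s, j)) : ℝ)) = B
    have hinj2 : Function.Injective (fun j : Fin 3 => E (s, j)) := by
      intro j1 j2 h
      have := E.injective h
      exact (Prod.mk.injEq _ _ _ _ ▸ this).2
    have himg : Finset.image (fun j : Fin 3 => E (s, j)) Finset.univ =
        (Finset.univ.filter fun i => g i = s) := by
      apply Finset.eq_of_subset_of_card_le
      · intro i hi
        rcases Finset.mem_image.1 hi with ⟨j, _, rfl⟩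
        exact hFmem (s, j)
      · rw [(hg s).1, Finset.card_image_of_injective _ hinj2]
        simp
    have h2 : ∑ i ∈ Finset.univ.filter (fun i => g i = s), (a i : ℝ) = B := by
      rw [← Nat.cast_sum, (hg s).2]
    rw [← h2, ← himg, Finset.sum_image (fun x _ y _ h => hinj2 h)]
  refine ⟨π, ?_⟩
  intro p q hpq
  rcases p with t | x
  swap
  · rw [utility13_nontriple, utility13_nontriple]
  rw [utility13_swap, utility13_triple]
  have hRHS : sv13 n B a (fun w => π.symm w) (π (.inl t)) = B + B := by
    rw [hπt, sv13_inner]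
    simp only [hsymr, hsyml]
    rw [hsumt t]
    show (B:ℝ) + (B:ℝ) = _
    rfl
  rw [hRHS]
  rcases q with t' | (i | u)
  · -- swap with another triple agent
    have ht' : t' ≠ t := by rintro rfl; exact hpq rfl
    rw [hπt t', sv13_inner]
    have e1 : (swapArr π (.inl t) (.inl t')).symm (.inl ()) = .inr (.inr ()) := by
      rw [swapArr13_symm_of_ne _ _ _ _ (by rw [hsymr]; simp) (by rw [hsymr]; simp), hsymr]
    have e2 : ∀ j : Fin 3, (swapArr π (.inl t) (.inl t')).symm (.inr (.inr (t', j))) =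
        .inr (.inl (E (t', j))) := by
      intro j
      rw [swapArr13_symm_of_ne _ _ _ _ (by rw [hsyml]; simp) (by rw [hsyml]; simp), hsyml]
    simp only [e1, e2]
    rw [hsumt t']
    exact le_rfl
  · -- swap with an element agent
    rcases hx : E.symm i with ⟨x1, x2⟩
    rw [hπe i, hx, sv13_leaf]
    by_cases hx1 : x1 = t
    · rw [swapArr13_symm_left _ _ _ _ (by rw [hsymt, hx1])]
      have := haleB i
      show (a i : ℝ) ≤ _
      linarith
    · rw [swapArr13_symm_of_ne _ _ _ _ (by rw [hsymt]; simp [hx1]) (by rw [hsymt]; simp)]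
      show (0:ℝ) ≤ _
      linarith
  · -- swap with the root agent
    rw [hπr u, sv13_root]
    rw [Finset.sum_eq_single t]
    · rw [swapArr13_symm_left _ _ _ _ (hsymt t)]
      show (B:ℝ) ≤ B + B
      linarith
    · intro b _ hb
      rw [swapArr13_symm_of_ne _ _ _ _ (by rw [hsymt]; simp [hb]) (by rw [hsymt]; simp)]
      rfl
    · intro h; exact absurd (Finset.mem_univ t) h

end Constr
section Aux4
variable {n B : ℕ} {a : Fin (3*n) → ℕ}

lemma adj13_inner_root (i : Fin n) : (seat13 n).Adj (.inr (.inl i)) (.inl ()) := True.intro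

lemma adj13_root_inner (i : Fin n) : (seat13 n).Adj (.inl ()) (.inr (.inl i)) := True.intro

lemma adj13_inner_leaf (i i' : Fin n) (j : Fin 3) (h : i = i') :
    (seat13 n).Adj (.inr (.inl i)) (.inr (.inr (i', j))) := h

lemma adj13_leaf_inner (i i' : Fin n) (j : Fin 3) (h : i = i') :
    (seat13 n).Adj (.inr (.inr (i', j))) (.inr (.inl i)) := h

/-- The key envy-freeness consequence. -/
lemma ef_key2 (π : Agents13 n ≃ Seats13 n)
    (hEF : envyFree (seat13 n) (prefs13 n B a) π) (t : Fin n) (v : Seats13 n)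
    (hv : Sum.inl t ≠ π.symm v) :
    sv13 n B a (fun w => π.symm w) v
      + (if (seat13 n).Adj v (π (.inl t)) then val13 n B a (π.symm v) else 0)
      ≤ sv13 n B a (fun w => π.symm w) (π (.inl t)) := by
  have hkey := ef_key π hEF t (π.symm v) hv
  rw [Equiv.apply_symm_apply] at hkey
  refine le_trans (le_of_eq ?_) hkey
  have hne : π (.inl t) ≠ v := by
    intro h
    exact hv (by rw [← h, Equiv.symm_apply_apply])
  have hsplit : ∀ F : Seats13 n → ℝ, (∑ w : Seats13 n, F w) =
      F (π (.inl t)) + (F v + ∑ w ∈ (Finset.univ.erase (π (.inl t))).erase v, F w) := by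
    intro F
    rw [← Finset.add_sum_erase _ F (Finset.mem_univ (π (.inl t)))]
    congr 1
    rw [← Finset.add_sum_erase _ F (Finset.mem_erase.2 ⟨fun h => hne h.symm, Finset.mem_univ v⟩)]
  show _ = sv13 n B a (fun w => (swapArr π (.inl t) (π.symm v)).symm w) v
  unfold sv13
  rw [hsplit, hsplit]
  beta_reduce
  have e1 : (swapArr π (.inl t) (π.symm v)).symm (π (.inl t)) = π.symm v :=
    swapArr13_symm_left _ _ _ _ (Equiv.symm_apply_apply _ _)
  have e2 : (swapArr π (.inl t) (π.symm v)).symm v = .inl t :=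
    swapArr13_symm_right _ _ _ _ rfl
  have e3 : ∀ w, w ∈ (Finset.univ.erase (π (.inl t))).erase v →
      (swapArr π (.inl t) (π.symm v)).symm w = π.symm w := by
    intro w hw
    rcases Finset.mem_erase.1 hw with ⟨hw1, hw2⟩
    rcases Finset.mem_erase.1 hw2 with ⟨hw3, _⟩
    refine swapArr13_symm_of_ne _ _ _ _ (fun h => hw3 ?_) (fun h => hw1 ?_)
    · rw [← Equiv.apply_symm_apply π w, h]
    · rw [← Equiv.apply_symm_apply π w, h, Equiv.apply_symm_apply]
  have e4 : (∑ w ∈ (Finset.univ.erase (π (Sum.inl t))).erase v,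
      (if (seat13 n).Adj v w then val13 n B a ((swapArr π (Sum.inl t) (π.symm v)).symm w) else 0)) =
      ∑ w ∈ (Finset.univ.erase (π (Sum.inl t))).erase v,
      (if (seat13 n).Adj v w then val13 n B a (π.symm w) else 0) :=
    Finset.sum_congr rfl (fun w hw => by rw [e3 w hw])
  have hloop : ¬ (seat13 n).Adj v v := (seat13 n).irrefl
  have hv0 : val13 n B a (Sum.inl t) = 0 := rfl
  rw [Equiv.symm_apply_apply, e1, e2, e4, hv0, if_neg hloop, if_neg hloop, ite_self]
  ring

lemma pigeon13 (π : Agents13 n ≃ Seats13 n) (S : Finset (Seats13 n))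
    (hS : ∀ v ∈ S, ∃ t : Fin n, π.symm v = Sum.inl t) : S.card ≤ n := by
  have h1 : (S.image π.symm).card = S.card := Finset.card_image_of_injective S π.symm.injective
  have h2 : S.image π.symm ⊆ (Finset.univ : Finset (Fin n)).image Sum.inl := by
    intro p hp
    rcases Finset.mem_image.1 hp with ⟨v, hv, rfl⟩
    rcases hS v hv with ⟨t, ht⟩
    exact Finset.mem_image.2 ⟨t, Finset.mem_univ t, ht.symm⟩
  calc S.card = (S.image π.symm).card := h1.symm
    _ ≤ ((Finset.univ : Finset (Fin n)).image Sum.inl).card := Finset.card_le_card h2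
    _ ≤ n := by
        rw [Finset.card_image_of_injective _ Sum.inl_injective]
        simp

lemma pigeon13' (π : Agents13 n ≃ Seats13 n) (S : Finset (Seats13 n))
    (hS : ∀ t : Fin n, π (Sum.inl t) ∈ S) : n ≤ S.card := by
  have h2 : (Finset.univ : Finset (Fin n)).image (fun t => π (Sum.inl t)) ⊆ S := by
    intro v hv
    rcases Finset.mem_image.1 hv with ⟨t, _, rfl⟩
    exact hS t
  have h1 : ((Finset.univ : Finset (Fin n)).image (fun t => π (Sum.inl t))).card = n := by
    rw [Finset.card_image_of_injective _ (fun x y hxy => Sum.inl_injective (π.injective hxy))]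
    simp
  exact le_trans (le_of_eq h1.symm) (Finset.card_le_card h2)

end Aux4
section Fwd
variable {n B : ℕ} {a : Fin (3*n) → ℕ}

theorem partition13 (hn : 2 ≤ n) (hpos : ∀ i, 0 < a i)
    (hsum : ∑ i, a i = n * B)
    (hrange : ∀ i, (B : ℝ) / 4 < (a i : ℝ) ∧ (a i : ℝ) < (B : ℝ) / 2)
    (π : Agents13 n ≃ Seats13 n) (hEF : envyFree (seat13 n) (prefs13 n B a) π) :
    ∃ g : Fin (3 * n) → Fin n, ∀ t : Fin n,
      (Finset.univ.filter fun i => g i = t).card = 3 ∧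
      (∑ i ∈ Finset.univ.filter fun i => g i = t, a i) = B := by
  classical
  have hn0 : 0 < n := by omega
  have hB2 : (2:ℝ) < B := by
    have h1 := (hrange ⟨0, by omega⟩).2
    have h2 : (1:ℝ) ≤ a ⟨0, by omega⟩ := by
      exact_mod_cast Nat.one_le_cast.2 (hpos ⟨0, by omega⟩)
    linarith
  have hB0 : (0:ℝ) < B := by linarith
  have hvnn : ∀ p : Agents13 n, 0 ≤ val13 n B a p := by
    rintro (t | (i | u))
    · exact le_refl 0
    · exact Nat.cast_nonneg _
    · exact le_of_lt hB0
  have hvelem : ∀ i : Fin (3*n), val13 n B a (.inr (.inl i)) < B/2 := fun i => (hrange i).2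
  have hvelem0 : ∀ i : Fin (3*n), (0:ℝ) < val13 n B a (.inr (.inl i)) := by
    intro i
    have := (hrange i).1
    have : (B:ℝ)/4 < val13 n B a (.inr (.inl i)) := this
    linarith
  have hval0 : ∀ p : Agents13 n, val13 n B a p = 0 → ∃ s, p = Sum.inl s := by
    rintro (t | (i | u)) hp
    · exact ⟨t, rfl⟩
    · exact absurd hp (ne_of_gt (hvelem0 i))
    · exact absurd hp (by show (B:ℝ) ≠ 0; linarith)
  set U : Seats13 n → ℝ := fun v => sv13 n B a (fun w => π.symm w) v with hU
  have key : ∀ (t : Fin n) (v : Seats13 n), Sum.inl t ≠ π.symm v →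
      U v + (if (seat13 n).Adj v (π (.inl t)) then val13 n B a (π.symm v) else 0)
        ≤ U (π (.inl t)) := fun t v hv => ef_key2 π hEF t v hv
  have hUle : ∀ (t : Fin n) (v : Seats13 n), U v ≤ U (π (.inl t)) := by
    intro t v
    by_cases hv : Sum.inl t = π.symm v
    · have hv2 : π (Sum.inl t) = v := by rw [hv, Equiv.apply_symm_apply]
      rw [hv2]
    · have h1 := key t v hv
      have h2 : (0:ℝ) ≤ if (seat13 n).Adj v (π (.inl t)) then val13 n B a (π.symm v) else 0 := by
        split_ifs
        · exact hvnn _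
        · exact le_refl 0
      linarith
  have hceq : ∀ t t' : Fin n, U (π (.inl t)) = U (π (.inl t')) :=
    fun t t' => le_antisymm (hUle t' _) (hUle t _)
  have hUnn : ∀ v, 0 ≤ U v := by
    intro v
    rw [hU]
    refine Finset.sum_nonneg (fun w _ => ?_)
    split_ifs
    · exact hvnn _
    · exact le_refl 0
  have hvalltB : ∀ p : Agents13 n, (B:ℝ) ≤ val13 n B a p → p = .inr (.inr ()) := by
    rintro (s | (i | u)) hp
    · exfalso; have : val13 n B a (Sum.inl s : Agents13 n) = 0 := rfl; rw [this] at hp; linarith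
    · exfalso; have := hvelem i; linarith
    · rfl
  rcases hr : π (.inr (.inr ())) with u | (i0 | ⟨i0, j0⟩)
  · -- Case 1 : root agent on the root seat
    obtain ⟨⟩ := u
    have hsymroot : π.symm (.inl ()) = .inr (.inr ()) := by rw [← hr, Equiv.symm_apply_apply]
    have hvalroot : val13 n B a (π.symm (.inl ())) = B := by rw [hsymroot]; rfl
    -- every triple agent sits at an inner seat
    have htri : ∀ t : Fin n, ∃ i, π (.inl t) = .inr (.inl i) := by
      intro t
      rcases hv : π (.inl t) with u | (i | ⟨i, j⟩)
      · exfalso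
        obtain ⟨⟩ := u
        have := π.injective (hv.trans hr.symm)
        simp at this
      · exact ⟨i, rfl⟩
      · exfalso
        have h1 : U (.inr (.inr (i, j))) = val13 n B a (π.symm (.inr (.inl i))) :=
          sv13_leaf _ i j
        have h2 : U (.inr (.inl i)) ≤ U (.inr (.inr (i, j))) := by
          rw [← hv]; exact hUle t _
        have h3 : (B:ℝ) ≤ U (.inr (.inl i)) := by
          have h0 : U (.inr (.inl i)) = val13 n B a (π.symm (.inl ())) +
              ∑ j' : Fin 3, val13 n B a (π.symm (.inr (.inr (i, j')))) := sv13_inner _ i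
          have h4 : (0:ℝ) ≤ ∑ j' : Fin 3, val13 n B a (π.symm (.inr (.inr (i, j')))) :=
            Finset.sum_nonneg (fun _ _ => hvnn _)
          rw [h0, hvalroot]
          linarith
        have h5 : val13 n B a (π.symm (.inr (.inl i))) < B/2 := by
          rcases hcase : π.symm (.inr (.inl i)) with s | (e' | u)
          · show (0:ℝ) < B/2
            linarith
          · exact hvelem e'
          · exfalso
            obtain ⟨⟩ := u
            have : (Sum.inr (Sum.inl i) : Seats13 n) = π (.inr (.inr ())) := by
              rw [← hcase, Equiv.apply_symm_apply]
            rw [hr] at this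
            simp at this
        linarith
    choose h hh using htri
    have hinj : Function.Injective h := by
      intro t1 t2 ht
      have : π (.inl t1) = π (.inl t2) := by rw [hh, hh, ht]
      exact Sum.inl_injective (π.injective this)
    have hsurj : Function.Surjective h := Finite.surjective_of_injective hinj
    -- every element agent sits at a leaf
    have helem : ∀ e' : Fin (3*n), ∃ x : Fin n × Fin 3, π (.inr (.inl e')) = .inr (.inr x) := by
      intro e'
      rcases hv : π (.inr (.inl e')) with u | (i | x)
      · exfalso
        obtain ⟨⟩ := u
        have := π.injective (hv.trans hr.symm)
        simp at this
      · exfalso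
        obtain ⟨t, ht⟩ := hsurj i
        have h2 : π (.inl t) = .inr (.inl i) := by rw [hh t, ht]
        have := π.injective (hv.trans h2.symm)
        simp at this
      · exact ⟨x, rfl⟩
    choose e he using helem
    have heinj : Function.Injective e := by
      intro e1 e2 hee
      have : π (.inr (.inl e1)) = π (.inr (.inl e2)) := by rw [he, he, hee]
      have := π.injective this
      simpa using this
    have hebij : Function.Bijective e :=
      (Fintype.bijective_iff_injective_and_card e).2 ⟨heinj, by simp [mul_comm]⟩
    set Ee := Equiv.ofBijective e hebij with hEe
    have heEe : ∀ i, e i = Ee i := fun _ => rfl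
    have hleafocc : ∀ x : Fin n × Fin 3, π.symm (.inr (.inr x)) = .inr (.inl (Ee.symm x)) := by
      intro x
      have h1 : π (.inr (.inl (Ee.symm x))) = .inr (.inr x) := by
        rw [he (Ee.symm x), heEe, Equiv.apply_symm_apply]
      rw [← h1, Equiv.symm_apply_apply]
    have hinnerocc : ∀ i : Fin n, ∃ t, π.symm (.inr (.inl i)) = .inl t := by
      intro i
      obtain ⟨t, rfl⟩ := hsurj i
      exact ⟨t, by rw [← hh t, Equiv.symm_apply_apply]⟩
    set L : Fin n → ℝ := fun i => ∑ j : Fin 3, val13 n B a (π.symm (.inr (.inr (i, j)))) with hL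
    have hUinner : ∀ i, U (.inr (.inl i)) = B + L i := by
      intro i
      have h0 : U (.inr (.inl i)) = val13 n B a (π.symm (.inl ())) + L i := sv13_inner _ i
      rw [h0, hvalroot]
    have hLeq : ∀ i i' : Fin n, L i = L i' := by
      intro i i'
      obtain ⟨t, rfl⟩ := hsurj i
      obtain ⟨t', rfl⟩ := hsurj i'
      have h1 := hceq t t'
      rw [hh t, hh t', hUinner, hUinner] at h1
      linarith
    have htot : ∑ i : Fin n, L i = n * B := by
      have h1 := sv13_total π hsum
      rw [Fintype.sum_sum_type, Fintype.sum_sum_type, Fintype.sum_prod_type] at h1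
      have h2 : ∑ u : Unit, val13 n B a (π.symm (.inl u)) = B := by
        rw [Finset.univ_unique, Finset.sum_singleton]
        exact hvalroot
      have h3 : ∑ i : Fin n, val13 n B a (π.symm (.inr (.inl i))) = 0 := by
        refine Finset.sum_eq_zero (fun i _ => ?_)
        obtain ⟨t, ht⟩ := hinnerocc i
        rw [ht]
        rfl
      rw [h2, h3] at h1
      have h4 : (∑ i : Fin n, ∑ j : Fin 3, val13 n B a (π.symm (.inr (.inr (i, j)))))
          = ∑ i : Fin n, L i := rfl
      rw [h4] at h1
      linarith [h1]
    have hLB : ∀ i : Fin n, L i = B := by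
      intro i
      have h1 : ∑ i' : Fin n, L i' = n * L i := by
        rw [Finset.sum_congr rfl (fun i' _ => hLeq i' i)]
        rw [Finset.sum_const, Finset.card_univ, Fintype.card_fin, nsmul_eq_mul]
      rw [h1] at htot
      have hnne : (n:ℝ) ≠ 0 := Nat.cast_ne_zero.2 (by omega)
      exact mul_left_cancel₀ hnne htot
    -- define the partition
    refine ⟨fun i => (e i).1, fun t => ?_⟩
    have hpair : ∀ j : Fin 3, (e (Ee.symm (t, j))).1 = t := by
      intro j
      have h2 : e (Ee.symm (t, j)) = (t, j) := by rw [heEe, Equiv.apply_symm_apply]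
      rw [h2]
    have hpinj : Function.Injective (fun j : Fin 3 => Ee.symm (t, j)) := by
      intro j1 j2 hj
      have := Ee.symm.injective hj
      exact (Prod.mk.injEq _ _ _ _ ▸ this).2
    have himg : Finset.image (fun j : Fin 3 => Ee.symm (t, j)) Finset.univ =
        Finset.univ.filter (fun i => (e i).1 = t) := by
      apply Finset.Subset.antisymm
      · intro i hi
        rcases Finset.mem_image.1 hi with ⟨j, _, rfl⟩
        refine Finset.mem_filter.2 ⟨Finset.mem_univ _, hpair j⟩
      · intro i hi
        have h1 : (e i).1 = t := (Finset.mem_filter.1 hi).2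
        refine Finset.mem_image.2 ⟨(e i).2, Finset.mem_univ _, ?_⟩
        have h2 : (t, (e i).2) = e i := by
          rw [← h1]
        rw [h2, heEe, Equiv.symm_apply_apply]
    have hcard : (Finset.univ.filter (fun i => (e i).1 = t)).card = 3 := by
      rw [← himg, Finset.card_image_of_injective _ hpinj]
      simp
    refine ⟨hcard, ?_⟩
    have hsumr : ∑ i ∈ Finset.univ.filter (fun i => (e i).1 = t), (a i : ℝ) = B := by
      rw [← himg, Finset.sum_image (fun x _ y _ hxy => hpinj hxy)]
      have h1 : ∀ j : Fin 3, (a (Ee.symm (t, j)) : ℝ) =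
          val13 n B a (π.symm (.inr (.inr (t, j)))) := by
        intro j
        rw [hleafocc]
        rfl
      rw [Finset.sum_congr rfl (fun j _ => h1 j)]
      exact hLB t
    have := hLB t
    rw [← Nat.cast_sum] at hsumr
    exact_mod_cast hsumr
  · -- Case 2 : root agent on an inner seat
    exfalso
    have hsymi0 : π.symm (.inr (.inl i0)) = .inr (.inr ()) := by
      rw [← hr, Equiv.symm_apply_apply]
    have hvB : val13 n B a (Sum.inr (Sum.inr ()) : Agents13 n) = B := rfl
    have t0 : Fin n := ⟨0, hn0⟩
    have hcB : ∀ t : Fin n, (B:ℝ) ≤ U (π (.inl t)) := by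
      intro t
      have h1 : U (.inl ()) = ∑ i : Fin n, val13 n B a (π.symm (.inr (.inl i))) := sv13_root _
      have h2 : val13 n B a (π.symm (.inr (.inl i0))) ≤
          ∑ i : Fin n, val13 n B a (π.symm (.inr (.inl i))) :=
        Finset.single_le_sum (f := fun i => val13 n B a (π.symm (.inr (.inl i))))
          (fun i _ => hvnn _) (Finset.mem_univ i0)
      rw [hsymi0, hvB] at h2
      have h3 := hUle t (.inl ())
      linarith
    -- occupant of any leaf under i0 is never the root agent's seat etc.
    have htri_leaf : ∀ (t : Fin n) (i : Fin n) (j : Fin 3),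
        π (.inl t) = .inr (.inr (i, j)) → i = i0 := by
      intro t i j ht
      have h1 : U (π (.inl t)) = val13 n B a (π.symm (.inr (.inl i))) := by
        rw [ht]; exact sv13_leaf _ i j
      have h2 := hcB t
      rw [h1] at h2
      have h3 := hvalltB _ h2
      have h4 : (Sum.inr (Sum.inl i) : Seats13 n) = π (.inr (.inr ())) := by
        rw [← h3, Equiv.apply_symm_apply]
      rw [hr] at h4
      simpa using h4
    -- occupants of leaves under i0 are elements, unless they are triples
    have hleafocc : ∀ j : Fin 3, (∃ s, π.symm (.inr (.inr (i0, j))) = .inl s) ∨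
        (∃ i, π.symm (.inr (.inr (i0, j))) = .inr (.inl i)) := by
      intro j
      rcases hx : π.symm (.inr (.inr (i0, j))) with s | (i | u)
      · exact Or.inl ⟨s, rfl⟩
      · exact Or.inr ⟨i, rfl⟩
      · exfalso
        obtain ⟨⟩ := u
        have : (Sum.inr (Sum.inr (i0, j)) : Seats13 n) = π (.inr (.inr ())) := by
          rw [← hx, Equiv.apply_symm_apply]
        rw [hr] at this
        simpa using this
    by_cases hex : ∃ (t : Fin n) (j : Fin 3), π (.inl t) = .inr (.inr (i0, j))
    · -- Subcase 2a : a triple agent on a leaf under i0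
      obtain ⟨t1, j, ht1⟩ := hex
      have hc : U (π (.inl t1)) = B := by
        rw [ht1]
        have h1 : U (.inr (.inr (i0, j))) = val13 n B a (π.symm (.inr (.inl i0))) :=
          sv13_leaf _ i0 j
        rw [h1, hsymi0, hvB]
      have hne1 : Sum.inl t1 ≠ π.symm (.inr (.inl i0)) := by rw [hsymi0]; simp
      have hkey := key t1 (.inr (.inl i0)) hne1
      rw [if_pos (by rw [ht1]; exact adj13_inner_leaf i0 i0 j rfl), hsymi0, hvB, hc] at hkey
      have hUi0 : U (.inr (.inl i0)) ≤ 0 := by linarith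
      have hexp : U (.inr (.inl i0)) = val13 n B a (π.symm (.inl ())) +
          ∑ j' : Fin 3, val13 n B a (π.symm (.inr (.inr (i0, j')))) := sv13_inner _ i0
      have hsnn : (0:ℝ) ≤ ∑ j' : Fin 3, val13 n B a (π.symm (.inr (.inr (i0, j')))) :=
        Finset.sum_nonneg (fun _ _ => hvnn _)
      -- the root seat is occupied by a triple
      have hroottri : ∃ s, π.symm (.inl ()) = .inl s := by
        apply hval0
        have := hvnn (π.symm (.inl ()))
        linarith
      -- every leaf under i0 is occupied by a triple
      have hleaftri : ∀ j' : Fin 3, ∃ s, π.symm (.inr (.inr (i0, j'))) = .inl s := by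
        intro j'
        apply hval0
        have h0 := hvnn (π.symm (.inl ()))
        have h1 : ∑ j' : Fin 3, val13 n B a (π.symm (.inr (.inr (i0, j')))) = 0 := by linarith
        have h2 := (Finset.sum_eq_zero_iff_of_nonneg (fun x _ => hvnn _)).1 h1
        exact h2 j' (Finset.mem_univ j')
      -- every inner seat other than i0 is occupied by a triple
      have hUroot : U (.inl ()) ≤ B := by rw [← hc]; exact hUle t1 _
      have hrootexp : U (.inl ()) = ∑ i : Fin n, val13 n B a (π.symm (.inr (.inl i))) :=
        sv13_root _
      have hinntri : ∀ i ∈ Finset.univ.erase i0, ∃ s, π.symm (.inr (.inl i)) = .inl s := by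
        have hsplit := Finset.add_sum_erase Finset.univ
          (fun i => val13 n B a (π.symm (.inr (.inl i)))) (Finset.mem_univ i0)
        have h1 : ∑ i ∈ Finset.univ.erase i0, val13 n B a (π.symm (.inr (.inl i))) = 0 := by
          have h2 : val13 n B a (π.symm (.inr (.inl i0))) = B := by rw [hsymi0, hvB]
          have h3 : (0:ℝ) ≤ ∑ i ∈ Finset.univ.erase i0,
              val13 n B a (π.symm (.inr (.inl i))) :=
            Finset.sum_nonneg (fun _ _ => hvnn _)
          rw [hrootexp] at hUroot
          rw [← hsplit] at hUroot
          beta_reduce at hUroot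
          rw [h2] at hUroot
          linarith
        intro i hi
        exact hval0 _ ((Finset.sum_eq_zero_iff_of_nonneg (fun x _ => hvnn _)).1 h1 i hi)
      -- pigeonhole : n+1 seats occupied by triples
      set S : Finset (Seats13 n) := insert (Sum.inl ())
        (insert (Sum.inr (Sum.inr (i0, j)))
          ((Finset.univ.erase i0).image (fun i => (Sum.inr (Sum.inl i) : Seats13 n)))) with hS
      have hScard : S.card = n + 1 := by
        rw [hS, Finset.card_insert_of_notMem (by simp), Finset.card_insert_of_notMem (by simp),
          Finset.card_image_of_injective _
            (fun x y hxy => by simpa using hxy),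
          Finset.card_erase_of_mem (Finset.mem_univ i0), Finset.card_univ, Fintype.card_fin]
        omega
      have hSle := pigeon13 π S (by
        intro v hv
        rw [hS] at hv
        rcases Finset.mem_insert.1 hv with rfl | hv
        · exact hroottri
        rcases Finset.mem_insert.1 hv with rfl | hv
        · exact ⟨t1, by rw [← ht1, Equiv.symm_apply_apply]⟩
        rcases Finset.mem_image.1 hv with ⟨i, hi, rfl⟩
        exact hinntri i hi)
      omega
    · -- Subcase 2b : no triple agent on a leaf under i0
      push_neg at hex
      have hnotleaf : ∀ (t : Fin n) (i : Fin n) (j : Fin 3),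
          π (.inl t) ≠ .inr (.inr (i, j)) := by
        intro t i j ht
        have := htri_leaf t i j ht
        subst this
        exact hex t j ht
      have hnotinner0 : ∀ t : Fin n, π (.inl t) ≠ .inr (.inl i0) := by
        intro t ht
        have := π.injective (ht.trans hr.symm)
        simp at this
      -- a triple agent occupies the root seat
      have hroottri : ∃ t1 : Fin n, π (.inl t1) = .inl () := by
        by_contra hno
        push_neg at hno
        have hmem : ∀ t : Fin n, π (.inl t) ∈
            (Finset.univ.erase i0).image (fun i => (Sum.inr (Sum.inl i) : Seats13 n)) := by
          intro t
          rcases hv : π (.inl t) with u | (i | ⟨i, j⟩)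
          · obtain ⟨⟩ := u; exact absurd hv (hno t)
          · refine Finset.mem_image.2 ⟨i, Finset.mem_erase.2 ⟨?_, Finset.mem_univ i⟩, rfl⟩
            intro hii0; subst hii0; exact hnotinner0 t hv
          · exact absurd hv (hnotleaf t i j)
        have h1 := pigeon13' π _ hmem
        rw [Finset.card_image_of_injective _ (fun x y hxy => by simpa using hxy),
          Finset.card_erase_of_mem (Finset.mem_univ i0), Finset.card_univ,
          Fintype.card_fin] at h1
        omega
      obtain ⟨t1, ht1⟩ := hroottri
      -- every inner seat other than i0 is occupied by a triple
      have hinntri : ∀ i : Fin n, i ≠ i0 → ∃ s, π.symm (.inr (.inl i)) = .inl s := by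
        intro i1 hi1
        by_contra hno
        have hmem : ∀ t : Fin n, π (.inl t) ∈ insert (Sum.inl ())
            (((Finset.univ.erase i0).erase i1).image
              (fun i => (Sum.inr (Sum.inl i) : Seats13 n))) := by
          intro t
          rcases hv : π (.inl t) with u | (i | ⟨i, j⟩)
          · obtain ⟨⟩ := u; exact Finset.mem_insert.2 (Or.inl rfl)
          · refine Finset.mem_insert.2 (Or.inr (Finset.mem_image.2 ⟨i, ?_, rfl⟩))
            refine Finset.mem_erase.2 ⟨?_, Finset.mem_erase.2 ⟨?_, Finset.mem_univ i⟩⟩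
            · intro hii; subst hii
              exact hno ⟨t, by rw [← hv, Equiv.symm_apply_apply]⟩
            · intro hii; subst hii; exact hnotinner0 t hv
          · exact absurd hv (hnotleaf t i j)
        have h1 := pigeon13' π _ hmem
        have h2 : ((Finset.univ.erase i0).erase i1).card = n - 2 := by
          rw [Finset.card_erase_of_mem (Finset.mem_erase.2 ⟨hi1, Finset.mem_univ i1⟩),
            Finset.card_erase_of_mem (Finset.mem_univ i0), Finset.card_univ, Fintype.card_fin]
          omega
        have h3 := Finset.card_insert_le (Sum.inl () : Seats13 n)
          (((Finset.univ.erase i0).erase i1).image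
            (fun i => (Sum.inr (Sum.inl i) : Seats13 n)))
        rw [Finset.card_image_of_injective _ (fun x y hxy => by simpa using hxy)] at h3
        omega
      -- hence U at root seat equals B
      have hc : U (π (.inl t1)) = B := by
        have e0 : U (.inl ()) = ∑ i : Fin n, val13 n B a (π.symm (.inr (.inl i))) :=
          sv13_root _
        rw [ht1, e0, ← Finset.add_sum_erase Finset.univ
          (fun i => val13 n B a (π.symm (.inr (.inl i)))) (Finset.mem_univ i0)]
        beta_reduce
        rw [hsymi0, hvB]
        rw [Finset.sum_eq_zero (fun i hi => by
          obtain ⟨s, hs⟩ := hinntri i (Finset.mem_erase.1 hi).1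
          rw [hs]; rfl)]
        ring
      -- swap t1 with the root agent
      have hne1 : Sum.inl t1 ≠ π.symm (.inr (.inl i0)) := by rw [hsymi0]; simp
      have hkey := key t1 (.inr (.inl i0)) hne1
      rw [if_pos (by rw [ht1]; exact adj13_inner_root i0), hsymi0, hvB, hc] at hkey
      -- but the leaves under i0 hold elements, so U (inner i0) > 0
      have hleafel : ∃ i, π.symm (.inr (.inr (i0, (0 : Fin 3)))) = .inr (.inl i) := by
        rcases hleafocc 0 with ⟨s, hs⟩ | h
        · exfalso
          refine hnotleaf s i0 0 ?_
          rw [← hs, Equiv.apply_symm_apply]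
        · exact h
      obtain ⟨ie, hie⟩ := hleafel
      have hexp : U (.inr (.inl i0)) = val13 n B a (π.symm (.inl ())) +
          ∑ j' : Fin 3, val13 n B a (π.symm (.inr (.inr (i0, j')))) := sv13_inner _ i0
      have h5 : val13 n B a (π.symm (.inr (.inr (i0, (0:Fin 3))))) ≤
          ∑ j' : Fin 3, val13 n B a (π.symm (.inr (.inr (i0, j')))) :=
        Finset.single_le_sum (f := fun j' => val13 n B a (π.symm (.inr (.inr (i0, j')))))
          (fun x _ => hvnn _) (Finset.mem_univ (0: Fin 3))
      have h6 := hvelem0 ie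
      rw [hie] at h5
      have h7 := hvnn (π.symm (.inl ()))
      linarith

  · -- Case 3 : root agent on a leaf
    exfalso
    have hsyml0 : π.symm (.inr (.inr (i0, j0))) = .inr (.inr ()) := by
      rw [← hr, Equiv.symm_apply_apply]
    have hvB : val13 n B a (Sum.inr (Sum.inr ()) : Agents13 n) = B := rfl
    have hcB : ∀ t : Fin n, (B:ℝ) ≤ U (π (.inl t)) := by
      intro t
      have h0 : U (.inr (.inl i0)) = val13 n B a (π.symm (.inl ())) +
          ∑ j : Fin 3, val13 n B a (π.symm (.inr (.inr (i0, j)))) := sv13_inner _ i0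
      have h2 : val13 n B a (π.symm (.inr (.inr (i0, j0)))) ≤
          ∑ j : Fin 3, val13 n B a (π.symm (.inr (.inr (i0, j)))) :=
        Finset.single_le_sum (f := fun j => val13 n B a (π.symm (.inr (.inr (i0, j)))))
          (fun x _ => hvnn _) (Finset.mem_univ j0)
      rw [hsyml0, hvB] at h2
      have h3 := hUle t (.inr (.inl i0))
      have h4 := hvnn (π.symm (.inl ()))
      linarith
    -- no triple agent sits on a leaf
    have hnotleaf : ∀ (t : Fin n) (i : Fin n) (j : Fin 3),
        π (.inl t) ≠ .inr (.inr (i, j)) := by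
      intro t i j ht
      have h1 : U (π (.inl t)) = val13 n B a (π.symm (.inr (.inl i))) := by
        rw [ht]; exact sv13_leaf _ i j
      have h2 := hcB t
      rw [h1] at h2
      have h3 := hvalltB _ h2
      have h4 : (Sum.inr (Sum.inl i) : Seats13 n) = π (.inr (.inr ())) := by
        rw [← h3, Equiv.apply_symm_apply]
      rw [hr] at h4
      simp at h4
    -- no triple agent sits on an inner seat occupied... occupants of other leaves are elements
    have hleafel : ∀ (i : Fin n) (j : Fin 3), (i, j) ≠ (i0, j0) →
        ∃ e, π.symm (.inr (.inr (i, j))) = .inr (.inl e) := by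
      intro i j hne
      rcases hx : π.symm (.inr (.inr (i, j))) with s | (e | u)
      · exfalso
        refine hnotleaf s i j ?_
        rw [← hx, Equiv.apply_symm_apply]
      · exact ⟨e, rfl⟩
      · exfalso
        obtain ⟨⟩ := u
        have : (Sum.inr (Sum.inr (i, j)) : Seats13 n) = π (.inr (.inr ())) := by
          rw [← hx, Equiv.apply_symm_apply]
        rw [hr] at this
        simp at this
        exact hne (by rw [this.1, this.2])
    rcases hrs : π.symm (.inl ()) with s1 | (e0 | u)
    · -- a triple agent on the root seat
      have ht1 : π (.inl s1) = .inl () := by rw [← hrs, Equiv.apply_symm_apply]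
      have hcS : ∑ i : Fin n, val13 n B a (π.symm (.inr (.inl i))) < B := by
        by_cases hexi : ∃ (i1 : Fin n) (e1 : Fin (3*n)), π.symm (.inr (.inl i1)) = .inr (.inl e1)
        · obtain ⟨i1, e1, he1⟩ := hexi
          have honly : ∀ i ∈ Finset.univ.erase i1, ∃ s, π.symm (.inr (.inl i)) = .inl s := by
            intro i hi
            have hii1 : i ≠ i1 := (Finset.mem_erase.1 hi).1
            rcases hx : π.symm (.inr (.inl i)) with s | (e2 | u)
            · exact ⟨s, rfl⟩
            · exfalso
              have hmem : ∀ t : Fin n, π (.inl t) ∈ insert (Sum.inl ())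
                  (((Finset.univ.erase i1).erase i).image
                    (fun i' => (Sum.inr (Sum.inl i') : Seats13 n))) := by
                intro t
                rcases hv : π (.inl t) with u' | (i2 | ⟨i2, j2⟩)
                · obtain ⟨⟩ := u'; exact Finset.mem_insert.2 (Or.inl rfl)
                · refine Finset.mem_insert.2 (Or.inr (Finset.mem_image.2 ⟨i2, ?_, rfl⟩))
                  refine Finset.mem_erase.2 ⟨?_, Finset.mem_erase.2 ⟨?_, Finset.mem_univ i2⟩⟩
                  · intro h2; subst h2
                    have : π.symm (.inr (.inl i2)) = .inl t := by
                      rw [← hv, Equiv.symm_apply_apply]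
                    rw [hx] at this; simp at this
                  · intro h2; subst h2
                    have : π.symm (.inr (.inl i2)) = .inl t := by
                      rw [← hv, Equiv.symm_apply_apply]
                    rw [he1] at this; simp at this
                · exact absurd hv (hnotleaf t i2 j2)
              have h1 := pigeon13' π _ hmem
              have h2 : ((Finset.univ.erase i1).erase i).card = n - 2 := by
                rw [Finset.card_erase_of_mem (Finset.mem_erase.2 ⟨hii1, Finset.mem_univ i⟩),
                  Finset.card_erase_of_mem (Finset.mem_univ i1), Finset.card_univ,
                  Fintype.card_fin]
                omega
              have h3 := Finset.card_insert_le (Sum.inl () : Seats13 n)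
                (((Finset.univ.erase i1).erase i).image
                  (fun i' => (Sum.inr (Sum.inl i') : Seats13 n)))
              rw [Finset.card_image_of_injective _ (fun x y hxy => by simpa using hxy)] at h3
              omega
            · exfalso
              obtain ⟨⟩ := u
              have : (Sum.inr (Sum.inl i) : Seats13 n) = π (.inr (.inr ())) := by
                rw [← hx, Equiv.apply_symm_apply]
              rw [hr] at this
              simp at this
          rw [← Finset.add_sum_erase Finset.univ
            (fun i => val13 n B a (π.symm (.inr (.inl i)))) (Finset.mem_univ i1)]
          beta_reduce
          rw [he1]
          rw [Finset.sum_eq_zero (fun i hi => by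
            obtain ⟨s, hs⟩ := honly i hi
            rw [hs]; rfl)]
          have := hvelem e1
          rw [add_zero]
          linarith
        · push_neg at hexi
          rw [Finset.sum_eq_zero (fun i _ => ?_)]
          · linarith
          rcases hx : π.symm (.inr (.inl i)) with s | (e2 | u)
          · rfl
          · exact absurd hx (hexi i e2)
          · exfalso
            obtain ⟨⟩ := u
            have : (Sum.inr (Sum.inl i) : Seats13 n) = π (.inr (.inr ())) := by
              rw [← hx, Equiv.apply_symm_apply]
            rw [hr] at this
            simp at this
      have hc : U (π (.inl s1)) = ∑ i : Fin n, val13 n B a (π.symm (.inr (.inl i))) := by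
        rw [ht1]; exact sv13_root _
      have := hcB s1
      rw [hc] at this
      linarith
    · -- an element agent on the root seat
      -- all inner seats are occupied by triples
      have hinntri : ∀ i : Fin n, ∃ s, π.symm (.inr (.inl i)) = .inl s := by
        intro i
        rcases hx : π.symm (.inr (.inl i)) with s | (e1 | u)
        · exact ⟨s, rfl⟩
        · exfalso
          have hmem : ∀ t : Fin n, π (.inl t) ∈
              (Finset.univ.erase i).image (fun i' => (Sum.inr (Sum.inl i') : Seats13 n)) := by
            intro t
            rcases hv : π (.inl t) with u' | (i2 | ⟨i2, j2⟩)
            · exfalso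
              obtain ⟨⟩ := u'
              have : π.symm (.inl ()) = .inl t := by rw [← hv, Equiv.symm_apply_apply]
              rw [hrs] at this; simp at this
            · refine Finset.mem_image.2 ⟨i2, Finset.mem_erase.2 ⟨?_, Finset.mem_univ i2⟩, rfl⟩
              intro h2; subst h2
              have : π.symm (.inr (.inl i2)) = .inl t := by
                rw [← hv, Equiv.symm_apply_apply]
              rw [hx] at this; simp at this
            · exact absurd hv (hnotleaf t i2 j2)
          have h1 := pigeon13' π _ hmem
          rw [Finset.card_image_of_injective _ (fun x y hxy => by simpa using hxy),
            Finset.card_erase_of_mem (Finset.mem_univ i), Finset.card_univ,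
            Fintype.card_fin] at h1
          omega
        · exfalso
          obtain ⟨⟩ := u
          have : (Sum.inr (Sum.inl i) : Seats13 n) = π (.inr (.inr ())) := by
            rw [← hx, Equiv.apply_symm_apply]
          rw [hr] at this
          simp at this
      set L : Fin n → ℝ := fun i => ∑ j : Fin 3, val13 n B a (π.symm (.inr (.inr (i, j)))) with hL
      have hUinner : ∀ i, U (.inr (.inl i)) = (a e0 : ℝ) + L i := by
        intro i
        have h0 : U (.inr (.inl i)) = val13 n B a (π.symm (.inl ())) + L i := sv13_inner _ i
        rw [h0, hrs]
        rfl
      have hLeq : ∀ i : Fin n, L i = L i0 := by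
        intro i
        obtain ⟨s, hs⟩ := hinntri i
        obtain ⟨s0, hs0⟩ := hinntri i0
        have hps : π (.inl s) = .inr (.inl i) := by rw [← hs, Equiv.apply_symm_apply]
        have hps0 : π (.inl s0) = .inr (.inl i0) := by rw [← hs0, Equiv.apply_symm_apply]
        have h1 := hceq s s0
        rw [hps, hps0, hUinner, hUinner] at h1
        linarith
      -- total sum computation
      have htot : (a e0 : ℝ) + n * L i0 = (n + 1) * B := by
        have h1 := sv13_total π hsum
        rw [Fintype.sum_sum_type, Fintype.sum_sum_type, Fintype.sum_prod_type] at h1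
        have h2 : ∑ u : Unit, val13 n B a (π.symm (.inl u)) = (a e0 : ℝ) := by
          rw [Finset.univ_unique, Finset.sum_singleton, hrs]; rfl
        have h3 : ∑ i : Fin n, val13 n B a (π.symm (.inr (.inl i))) = 0 := by
          refine Finset.sum_eq_zero (fun i _ => ?_)
          obtain ⟨s, hs⟩ := hinntri i
          rw [hs]; rfl
        have h4 : (∑ i : Fin n, ∑ j : Fin 3, val13 n B a (π.symm (.inr (.inr (i, j)))))
            = (n:ℝ) * L i0 := by
          rw [Finset.sum_congr rfl (fun i _ => (hLeq i : (L i : ℝ) = L i0))]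
          rw [Finset.sum_const, Finset.card_univ, Fintype.card_fin, nsmul_eq_mul]
        rw [h2, h3, h4] at h1
        linarith
      -- lower bound on L i0
      have hLgt : 3 * (B:ℝ) / 2 < L i0 := by
        have hsplit := Finset.add_sum_erase Finset.univ
          (fun j => val13 n B a (π.symm (.inr (.inr (i0, j))))) (Finset.mem_univ j0)
        have hcard2 : (Finset.univ.erase j0).card = 2 := by
          rw [Finset.card_erase_of_mem (Finset.mem_univ j0), Finset.card_univ]
          rfl
        have hlow : ∀ j ∈ Finset.univ.erase j0,
            (B:ℝ)/4 < val13 n B a (π.symm (.inr (.inr (i0, j)))) := by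
          intro j hj
          obtain ⟨e, he⟩ := hleafel i0 j (by
            intro hpair
            exact (Finset.mem_erase.1 hj).1 (Prod.mk.injEq _ _ _ _ ▸ hpair).2)
          rw [he]
          exact (hrange e).1
        have hne0 : (Finset.univ.erase j0).Nonempty := by
          rw [← Finset.card_pos, hcard2]; omega
        have hs2 := Finset.sum_lt_sum_of_nonempty hne0 hlow
        rw [Finset.sum_const, hcard2] at hs2
        have hL0 : L i0 = val13 n B a (π.symm (.inr (.inr (i0, j0)))) +
            ∑ j ∈ Finset.univ.erase j0, val13 n B a (π.symm (.inr (.inr (i0, j)))) := by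
          rw [hL]
          beta_reduce
          rw [← hsplit]
        rw [hL0, hsyml0, hvB]
        have h2s : (2:ℕ) • ((B:ℝ)/4) = B/2 := by
          rw [nsmul_eq_mul]; push_cast; ring
        rw [h2s] at hs2
        linarith
      have hae0 : (B:ℝ)/4 < a e0 := (hrange e0).1
      have hnR : (2:ℝ) ≤ n := by exact_mod_cast hn
      have h9 : (n:ℝ) * (3 * B / 2) < n * L i0 :=
        mul_lt_mul_of_pos_left hLgt (by linarith)
      nlinarith [h9, htot, hae0, hB0, hnR]
    · -- the root agent cannot be on the root seat here
      obtain ⟨⟩ := u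
      have : (Sum.inl () : Seats13 n) = π (.inr (.inr ())) := by
        rw [← hrs, Equiv.apply_symm_apply]
      rw [hr] at this
      simp at this

end Fwd
/-- with `n ≥ 2`, positive integers `a_1, …, a_{3n}` summing to `nB` with
`B/4 < a_i < B/2`, the above instance has an envy-free arrangement if and only if
`{a_1, …, a_{3n}}` can be partitioned into `n` triples each summing to `B`. -/
theorem envyFree_iff_three_partition (n B : ℕ) (hn : 2 ≤ n)
    (a : Fin (3 * n) → ℕ) (hpos : ∀ i, 0 < a i)
    (hsum : ∑ i, a i = n * B)
    (hrange : ∀ i, (B : ℝ) / 4 < (a i : ℝ) ∧ (a i : ℝ) < (B : ℝ) / 2) :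
    (∃ π : Agents13 n ≃ Seats13 n, envyFree (seat13 n) (prefs13 n B a) π) ↔
    (∃ g : Fin (3 * n) → Fin n, ∀ t : Fin n,
      (Finset.univ.filter fun i => g i = t).card = 3 ∧
      (∑ i ∈ Finset.univ.filter fun i => g i = t, a i) = B) := by
  constructor
  · rintro ⟨π, hEF⟩
    exact partition13 hn hpos hsum hrange π hEF
  · rintro ⟨g, hg⟩
    exact constr13 hn hpos hsum hrange g hg
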